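/- The Lobachevsky function has the uniformly convergent Fourier series representation: for every real θ, Λ(θ) = (1/2) ∑_{n=1}^∞ sin(2nθ)/n², where the series converges (in the sense of summability of the sequence of partial sums). -/

import Mathlib

open MeasureTheory Real

/-- The Lobachevsky function `Λ(θ) = -∫₀^θ log |2 sin t| dt`. -/
noncomputable def lobachevsky (θ : ℝ) : ℝ :=
  -∫ t in (0:ℝ)..θ, Real.log |2 * Real.sin t|

namespace LobAux

open Filter Finset

lemma integrableOn_log_Ioc01 : IntegrableOn Real.log (Set.Ioc (0:ℝ) 1) volume := by
  have hg : IntegrableOn (fun u : ℝ => 2 * u ^ (-(1/2) : ℝ)) (Set.Ioc (0:ℝ) 1) volume := by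
    have := (intervalIntegral.intervalIntegrable_rpow' (a := 0) (b := 1)
      (r := -(1/2)) (by norm_num)).const_mul 2
    rwa [intervalIntegrable_iff_integrableOn_Ioc_of_le (by norm_num : (0:ℝ) ≤ 1)] at this
  refine hg.mono' Real.measurable_log.aestronglyMeasurable.restrict ?_
  filter_upwards [ae_restrict_mem measurableSet_Ioc] with u hu
  have hu0 : 0 < u := hu.1
  have h1 : Real.log u ≤ 0 := Real.log_nonpos hu0.le hu.2
  rw [Real.norm_eq_abs, abs_of_nonpos h1]
  have h2 : Real.log (u ^ (-(1/2):ℝ)) = (-(1/2)) * Real.log u := Real.log_rpow hu0 _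
  have h3 : Real.log (u ^ (-(1/2):ℝ)) ≤ u ^ (-(1/2):ℝ) - 1 :=
    Real.log_le_sub_one_of_pos (Real.rpow_pos_of_pos hu0 _)
  nlinarith [Real.rpow_pos_of_pos hu0 (-(1/2):ℝ)]

lemma intervalIntegrable_log_abs (a b : ℝ) :
    IntervalIntegrable (fun u => Real.log |u|) volume a b := by
  have base : ∀ c : ℝ, 0 ≤ c → IntervalIntegrable (fun u => Real.log |u|) volume 0 c := by
    intro c hc
    have h01 : IntervalIntegrable Real.log volume 0 1 := by
      rw [intervalIntegrable_iff_integrableOn_Ioc_of_le (by norm_num : (0:ℝ) ≤ 1)]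
      exact integrableOn_log_Ioc01
    have hlog : IntervalIntegrable Real.log volume 0 c := by
      rcases le_total c 1 with h | h
      · refine h01.mono_set ?_
        rw [Set.uIcc_of_le hc, Set.uIcc_of_le (by norm_num : (0:ℝ) ≤ 1)]
        exact Set.Icc_subset_Icc le_rfl h
      · refine h01.trans (intervalIntegral.intervalIntegrable_log ?_)
        rw [Set.uIcc_of_le h]
        intro h0
        exact absurd h0.1 (by norm_num)
    constructor
    · exact hlog.1.congr_fun (fun u hu => by rw [abs_of_pos hu.1]) measurableSet_Ioc
    · rw [Set.Ioc_eq_empty (by simpa using hc)]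
      exact integrableOn_empty
  have base' : ∀ c : ℝ, IntervalIntegrable (fun u => Real.log |u|) volume 0 c := by
    intro c
    rcases le_total 0 c with hc | hc
    · exact base c hc
    · have := (base (-c) (by linarith))
      rw [IntervalIntegrable.iff_comp_neg] at this
      simp only [neg_zero, neg_neg, abs_neg] at this
      exact this
  exact (base' a).symm.trans (base' b)

lemma locallyIntegrable_log_abs_sin :
    LocallyIntegrable (fun t => Real.log |Real.sin t|) volume := by
  intro x
  by_cases hx : Real.sin x = 0
  · obtain ⟨k, hk⟩ := Real.sin_eq_zero_iff.mp hx
    refine ⟨Set.Ioo (x-1) (x+1), Ioo_mem_nhds (by linarith) (by linarith), ?_⟩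
    have hInt : IntegrableOn (fun t => Real.log (π/2) + |Real.log (|t - x|)|)
        (Set.Ioo (x-1) (x+1)) volume := by
      have h1 : IntervalIntegrable (fun t => Real.log (|t - x|)) volume (x-1) (x+1) := by
        have h := (intervalIntegrable_log_abs (-1) 1).comp_sub_right x
        have e1 : -1 + x = x - 1 := by ring
        have e2 : 1 + x = x + 1 := by ring
        rwa [e1, e2] at h
      have h2 : IntervalIntegrable (fun t => Real.log (π/2) + |Real.log (|t - x|)|)
          volume (x-1) (x+1) := intervalIntegrable_const.add h1.abs
      rw [intervalIntegrable_iff_integrableOn_Ioc_of_le (by linarith)] at h2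
      exact h2.mono_set Set.Ioo_subset_Ioc_self
    refine hInt.mono' ((Real.measurable_log.comp
      (_root_.continuous_abs.comp Real.continuous_sin).measurable).aestronglyMeasurable.restrict) ?_
    filter_upwards [ae_restrict_mem measurableSet_Ioo] with t ht
    rcases eq_or_ne t x with rfl | htx
    · simp only [hx, abs_zero, Real.log_zero, norm_zero]
      have h2 : 0 ≤ Real.log (π/2) := Real.log_nonneg (by linarith [Real.pi_gt_three])
      have h3 := abs_nonneg (Real.log (|t - t|))
      linarith
    · set u := t - x with hu
      have hu0 : u ≠ 0 := sub_ne_zero.mpr htx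
      have hu1 : |u| < 1 := by
        rw [abs_sub_lt_iff]
        constructor <;> [linarith [ht.2]; linarith [ht.1]]
      have habs : |Real.sin t| = |Real.sin u| := by
        have : t = u + (k:ℝ) * π := by rw [hu]; linarith [hk]
        rw [this, Real.sin_add_int_mul_pi]
        rw [abs_mul]
        have hone : |((-1:ℝ)) ^ k| = 1 := by
          rcases Int.even_or_odd k with h | h
          · rw [h.neg_one_zpow]; norm_num
          · rw [h.neg_one_zpow]; norm_num
        rw [hone, one_mul]
      have hlow : 2/π * |u| ≤ |Real.sin u| := by
        apply Real.mul_abs_le_abs_sin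
        have : (1:ℝ) ≤ π/2 := by linarith [Real.pi_gt_three]
        linarith
      have hsinpos : 0 < |Real.sin u| := lt_of_lt_of_le (by positivity) hlow
      have hsin1 : |Real.sin t| ≤ 1 := Real.abs_sin_le_one t
      have hlogle : Real.log |Real.sin t| ≤ 0 := Real.log_nonpos (abs_nonneg _) hsin1
      rw [Real.norm_eq_abs, abs_of_nonpos hlogle]
      have hmono : Real.log (2/π * |u|) ≤ Real.log |Real.sin t| := by
        rw [habs]
        exact Real.log_le_log (by positivity) hlow
      have hsplit : Real.log (2/π * |u|) = Real.log (2/π) + Real.log (|u|) :=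
        Real.log_mul (by positivity) (abs_ne_zero.mpr hu0)
      have h2pi : Real.log (2/π) = -Real.log (π/2) := by
        rw [Real.log_div (by norm_num) (by positivity), Real.log_div (by positivity) (by norm_num)]
        ring
      have : -Real.log |Real.sin t| ≤ Real.log (π/2) - Real.log (|u|) := by
        rw [hsplit, h2pi] at hmono
        linarith
      calc -Real.log |Real.sin t| ≤ Real.log (π/2) - Real.log (|u|) := this
        _ ≤ Real.log (π/2) + |Real.log (|u|)| := by
            have := neg_abs_le (Real.log (|u|))
            linarith
  · have hopen : IsOpen {t : ℝ | Real.sin t ≠ 0} :=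
      isOpen_ne.preimage Real.continuous_sin
    obtain ⟨ε, hε, hball⟩ := Metric.isOpen_iff.mp hopen x hx
    refine ⟨Set.Icc (x - ε/2) (x + ε/2), Icc_mem_nhds (by linarith) (by linarith), ?_⟩
    apply ContinuousOn.integrableOn_Icc
    apply ContinuousOn.log
    · exact (_root_.continuous_abs.comp Real.continuous_sin).continuousOn
    · intro t ht
      have hb : t ∈ Metric.ball x ε := by
        rw [Metric.mem_ball, Real.dist_eq]
        have : |t - x| ≤ ε/2 := abs_sub_le_iff.mpr ⟨by linarith [ht.2], by linarith [ht.1]⟩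
        linarith
      have hne : Real.sin t ≠ 0 := hball hb
      simpa using hne

lemma intervalIntegrable_log_abs_sin (a b : ℝ) :
    IntervalIntegrable (fun t => Real.log |Real.sin t|) volume a b := by
  constructor
  · exact (locallyIntegrable_log_abs_sin.integrableOn_isCompact isCompact_Icc).mono_set
      Set.Ioc_subset_Icc_self
  · exact (locallyIntegrable_log_abs_sin.integrableOn_isCompact isCompact_Icc).mono_set
      Set.Ioc_subset_Icc_self

lemma sin_eq_zero_null : volume {t : ℝ | Real.sin t = 0} = 0 := by
  have hsub : {t : ℝ | Real.sin t = 0} ⊆ Set.range (fun k : ℤ => (k:ℝ) * π) := by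
    intro t ht
    obtain ⟨k, hk⟩ := Real.sin_eq_zero_iff.mp ht
    exact ⟨k, hk⟩
  exact measure_mono_null hsub ((Set.countable_range _).measure_zero _)

lemma ae_sin_ne_zero : ∀ᵐ t : ℝ, Real.sin t ≠ 0 := by
  rw [ae_iff]
  simpa only [not_not] using sin_eq_zero_null

noncomputable def bound (t : ℝ) : ℝ := 3 + Real.log 2 + |Real.log (|2 * Real.sin t|)|

lemma bound_nonneg (t : ℝ) : 0 ≤ bound t := by
  have h1 : 0 ≤ Real.log 2 := Real.log_nonneg one_le_two
  have h2 := abs_nonneg (Real.log (|2 * Real.sin t|))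
  unfold bound
  linarith

lemma intervalIntegrable_bound (a b : ℝ) :
    IntervalIntegrable bound volume a b := by
  have h1 : IntervalIntegrable
      (fun t => 3 + Real.log 2 + |Real.log 2 + Real.log (|Real.sin t|)|) volume a b :=
    intervalIntegrable_const.add
      ((intervalIntegrable_const.add (intervalIntegrable_log_abs_sin a b)).abs)
  have hae : (fun t => 3 + Real.log 2 + |Real.log 2 + Real.log (|Real.sin t|)|)
      =ᵐ[volume] bound := by
    filter_upwards [ae_sin_ne_zero] with t ht
    have h2 : Real.log (|2 * Real.sin t|) = Real.log 2 + Real.log (|Real.sin t|) := by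
      rw [abs_mul, abs_two, Real.log_mul (by norm_num) (abs_ne_zero.mpr ht)]
    simp only [bound, h2]
  exact ⟨h1.1.congr_fun_ae (ae_restrict_of_ae hae), h1.2.congr_fun_ae (ae_restrict_of_ae hae)⟩

lemma smul_inv_eq_div (n : ℕ) (w : ℂ) : ((n:ℝ))⁻¹ • w = w / (n:ℂ) := by
  rw [Complex.real_smul, Complex.ofReal_inv, Complex.ofReal_natCast, inv_mul_eq_div]

lemma geom_bound {z : ℂ} (hz : ‖z‖ = 1) (hz1 : z ≠ 1) (n : ℕ) :
    ‖∑ i ∈ Finset.range n, z ^ i‖ ≤ 2 / ‖1 - z‖ := by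
  have hz1' : z - 1 ≠ 0 := sub_ne_zero.mpr hz1
  have hpos : 0 < ‖z - 1‖ := norm_pos_iff.mpr hz1'
  rw [geom_sum_eq hz1, norm_div]
  have hnum : ‖z ^ n - 1‖ ≤ 2 := by
    calc ‖z ^ n - 1‖ ≤ ‖z ^ n‖ + ‖(1:ℂ)‖ := norm_sub_le _ _
      _ = 2 := by rw [norm_pow, hz, one_pow, norm_one]; norm_num
  calc ‖z ^ n - 1‖ / ‖z - 1‖ ≤ 2 / ‖z - 1‖ := by gcongr
    _ = 2 / ‖1 - z‖ := by rw [norm_sub_rev]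

lemma telescope (u : ℕ → ℝ) : ∀ b a : ℕ, a ≤ b →
    ∑ i ∈ Finset.Ioc a b, (u i - u (i+1)) = u (a+1) - u (b+1) := by
  intro b
  induction b with
  | zero =>
    intro a ha
    interval_cases a
    simp
  | succ b ih =>
    intro a ha
    rcases Nat.lt_or_ge a (b+1) with h | h
    · have hab : a ≤ b := Nat.lt_succ_iff.mp h
      rw [Finset.sum_Ioc_succ_top hab, ih a hab]
      ring
    · have : a = b + 1 := le_antisymm ha h
      subst this
      simp

lemma tail_bound {z : ℂ} (hz : ‖z‖ = 1) (hz1 : z ≠ 1) (M N : ℕ) :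
    ‖∑ n ∈ Finset.Ioc M N, ((n:ℝ))⁻¹ • z ^ n‖ ≤ 4 / (((M:ℝ)+1) * ‖1 - z‖) := by
  have hpos : 0 < ‖1 - z‖ := norm_pos_iff.mpr (sub_ne_zero.mpr (Ne.symm hz1))
  rcases le_or_gt N M with h | hMN
  · rw [Finset.Ioc_eq_empty (by omega), Finset.sum_empty, norm_zero]
    positivity
  have hN0 : 0 < N := by omega
  set K := 2 / ‖1 - z‖ with hK
  have hK0 : 0 < K := by positivity
  have hG : ∀ m : ℕ, ‖∑ i ∈ Finset.range m, z ^ i‖ ≤ K := fun m => geom_bound hz hz1 m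
  have hby := Finset.sum_Ioc_by_parts (fun i => ((i:ℝ))⁻¹) (fun i => z ^ i) hMN
  simp only at hby
  have hmono : ∀ i : ℕ, 1 ≤ i → (((i:ℝ))+1)⁻¹ ≤ ((i:ℝ))⁻¹ := by
    intro i hi
    have h0 : (0:ℝ) < (i:ℝ) := by exact_mod_cast Nat.pos_of_ne_zero (by omega)
    exact inv_anti₀ h0 (by linarith)
  have h1 : ‖((N:ℝ))⁻¹ • (∑ i ∈ Finset.range (N+1), z ^ i)‖ ≤ ((N:ℝ))⁻¹ * K := by
    rw [norm_smul, Real.norm_eq_abs, abs_of_nonneg (by positivity)]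
    exact mul_le_mul_of_nonneg_left (hG _) (by positivity)
  have h2 : ‖(((M+1:ℕ):ℝ))⁻¹ • (∑ i ∈ Finset.range (M+1), z ^ i)‖ ≤ (((M:ℝ))+1)⁻¹ * K := by
    rw [norm_smul, Real.norm_eq_abs, abs_of_nonneg (by positivity)]
    have hc : (((M+1:ℕ):ℝ)) = (M:ℝ)+1 := by push_cast; ring
    rw [hc]
    exact mul_le_mul_of_nonneg_left (hG _) (by positivity)
  have h3 : ‖∑ i ∈ Finset.Ioc M (N-1),
        ((((i+1:ℕ):ℝ))⁻¹ - ((i:ℝ))⁻¹) • (∑ j ∈ Finset.range (i+1), z ^ j)‖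
      ≤ ((((M:ℝ))+1)⁻¹ - ((N:ℝ))⁻¹) * K := by
    refine (norm_sum_le _ _).trans ?_
    have hterm : ∀ i ∈ Finset.Ioc M (N-1),
        ‖((((i+1:ℕ):ℝ))⁻¹ - ((i:ℝ))⁻¹) • (∑ j ∈ Finset.range (i+1), z ^ j)‖
          ≤ (((i:ℝ))⁻¹ - (((i+1:ℕ):ℝ))⁻¹) * K := by
      intro i hi
      have hi1 : 1 ≤ i := by
        have := (Finset.mem_Ioc.mp hi).1
        omega
      have hle : (((i+1:ℕ):ℝ))⁻¹ ≤ ((i:ℝ))⁻¹ := by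
        push_cast
        exact hmono i hi1
      rw [norm_smul, Real.norm_eq_abs, abs_of_nonpos (by linarith)]
      have hre : -((((i+1:ℕ):ℝ))⁻¹ - ((i:ℝ))⁻¹) = ((i:ℝ))⁻¹ - (((i+1:ℕ):ℝ))⁻¹ := by ring
      rw [hre]
      exact mul_le_mul_of_nonneg_left (hG _) (by linarith)
    refine (Finset.sum_le_sum hterm).trans ?_
    rw [← Finset.sum_mul]
    have htel : (∑ i ∈ Finset.Ioc M (N-1), (((i:ℝ))⁻¹ - (((i+1:ℕ):ℝ))⁻¹))
        = (((M+1:ℕ):ℝ))⁻¹ - (((N-1+1:ℕ):ℝ))⁻¹ :=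
      telescope (fun i => ((i:ℝ))⁻¹) (N-1) M (by omega)
    rw [htel]
    have hN1 : N - 1 + 1 = N := by omega
    rw [hN1]
    push_cast
    exact mul_le_mul_of_nonneg_right le_rfl hK0.le
  rw [hby]
  have hbig := (norm_sub_le _ _).trans (add_le_add ((norm_sub_le _ _).trans (add_le_add h1 h2)) h3)
  refine hbig.trans (le_of_eq ?_)
  rw [hK, div_eq_mul_inv, div_eq_mul_inv, mul_inv]
  ring

lemma norm_one_sub_exp (t : ℝ) :
    ‖1 - Complex.exp ((2*t) * Complex.I)‖ = 2 * |Real.sin t| := by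
  have h1 : (1 : ℂ) - Complex.exp ((2*t) * Complex.I)
      = Complex.ofReal (1 - Real.cos (2*t)) + Complex.ofReal (-Real.sin (2*t)) * Complex.I := by
    rw [Complex.exp_mul_I]
    push_cast
    ring
  rw [h1, Complex.norm_def, Complex.normSq_add_mul_I]
  have h3 := Real.sin_sq_add_cos_sq t
  have hab : |Real.sin t|^2 = Real.sin t ^2 := sq_abs _
  have hs2 : Real.sin (2*t) = 2 * Real.sin t * Real.cos t := Real.sin_two_mul t
  have hc2 : Real.cos (2*t) = Real.cos t ^ 2 - Real.sin t ^ 2 := Real.cos_two_mul' t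
  have h2 : (1 - Real.cos (2*t))^2 + (-Real.sin (2*t))^2 = (2*|Real.sin t|)^2 := by
    rw [hs2, hc2]
    nlinarith [h3, hab]
  rw [h2, Real.sqrt_sq (by positivity)]

lemma exp_ne_one {t : ℝ} (h : Real.sin t ≠ 0) : Complex.exp ((2*t) * Complex.I) ≠ 1 := by
  intro he
  have hn := norm_one_sub_exp t
  rw [he, sub_self, norm_zero] at hn
  have habs : |Real.sin t| = 0 := by linarith
  exact h (abs_eq_zero.mp habs)

lemma re_term (t : ℝ) (n : ℕ) :
    (((n:ℝ))⁻¹ • Complex.exp ((2*t) * Complex.I) ^ n).re = Real.cos (2*n*t) / n := by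
  have h1 : Complex.exp ((2*t) * Complex.I) ^ n = Complex.exp ((2*n*t : ℝ) * Complex.I) := by
    rw [← Complex.exp_nat_mul]
    congr 1
    push_cast
    ring
  rw [h1, Complex.smul_re, Complex.exp_ofReal_mul_I_re, smul_eq_mul, inv_mul_eq_div]

noncomputable def F (N : ℕ) (t : ℝ) : ℝ := ∑ n ∈ Finset.Ioc 0 N, Real.cos (2*n*t) / n

lemma norm_exp_two_mul_I (t : ℝ) : ‖Complex.exp ((2*t) * Complex.I)‖ = 1 := by
  have harg : (2 * (t:ℂ)) * Complex.I = ((2*t : ℝ) : ℂ) * Complex.I := by push_cast; ring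
  rw [show (2*(t:ℂ)) * Complex.I = ((2*t : ℝ) : ℂ) * Complex.I from harg,
    Complex.norm_exp_ofReal_mul_I]

lemma tendsto_partial_log {z : ℂ} (hz : ‖z‖ = 1) (hz1 : z ≠ 1) :
    Filter.Tendsto (fun N => ∑ n ∈ Finset.range N, ((n:ℝ))⁻¹ • z ^ n) Filter.atTop
      (nhds (-Complex.log (1 - z))) := by
  have hcauchy : CauchySeq (fun N => ∑ n ∈ Finset.range N, ((n:ℝ))⁻¹ • z ^ n) := by
    rw [← cauchySeq_shift 1]
    have hshift : (fun N => ∑ n ∈ Finset.range (N+1), ((n:ℝ))⁻¹ • z ^ n)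
        = fun N => ∑ i ∈ Finset.range N, (((i+1:ℕ):ℝ))⁻¹ • z ^ (i+1) := by
      funext N
      rw [Finset.sum_range_succ']
      simp
    rw [hshift]
    apply Antitone.cauchySeq_series_mul_of_tendsto_zero_of_bounded (b := 2/‖1-z‖)
    · intro m n hmn
      show (((n+1:ℕ):ℝ))⁻¹ ≤ (((m+1:ℕ):ℝ))⁻¹
      have h0 : (0:ℝ) < ((m+1:ℕ):ℝ) := by exact_mod_cast Nat.succ_pos m
      apply inv_anti₀ h0
      exact_mod_cast Nat.add_le_add_right hmn 1
    · have := tendsto_one_div_add_atTop_nhds_zero_nat (𝕜 := ℝ)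
      simpa only [one_div] using this.congr (fun n => by push_cast; ring)
    · intro n
      have : ∑ i ∈ Finset.range n, z ^ (i+1) = z * ∑ i ∈ Finset.range n, z ^ i := by
        rw [Finset.mul_sum]
        exact Finset.sum_congr rfl fun i _ => by ring
      rw [this, norm_mul, hz, one_mul]
      exact geom_bound hz hz1 n
  obtain ⟨L, hL⟩ := cauchySeq_tendsto_of_complete hcauchy
  have hslit : (1 - z) ∈ Complex.slitPlane := by
    rw [Complex.mem_slitPlane_iff]
    rcases eq_or_ne z.im 0 with him | him
    · left
      have h1 : ‖z‖ = 1 := by exact hz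
      have h2 : z.re * z.re + z.im * z.im = 1 := by
        rw [← Complex.normSq_apply, ← Complex.sq_norm, h1]; norm_num
      rw [him] at h2
      have h3 : z.re = 1 ∨ z.re = -1 := by
        have hfac : (z.re - 1) * (z.re + 1) = 0 := by nlinarith
        rcases mul_eq_zero.mp hfac with hh | hh
        · left; linarith
        · right; linarith
      rcases h3 with hh | hh
      · exact absurd (Complex.ext (by simpa using hh) (by simpa using him)) hz1
      · rw [Complex.sub_re, Complex.one_re, hh]
        norm_num
    · right
      rw [Complex.sub_im, Complex.one_im]
      simpa using him
  have habel := Complex.tendsto_tsum_powerSeries_nhdsWithin_lt hL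
  have hc : Filter.Tendsto (fun x : ℝ => -Complex.log (1 - x * z))
      (nhdsWithin 1 (Set.Iio 1)) (nhds (-Complex.log (1 - z))) := by
    have hcont1 : ContinuousAt Complex.log (1 - z) := continuousAt_clog hslit
    have hbase : Filter.Tendsto (fun x : ℝ => 1 - (x:ℂ) * z)
        (nhdsWithin 1 (Set.Iio 1)) (nhds (1 - z)) := by
      apply Filter.Tendsto.mono_left ?_ nhdsWithin_le_nhds
      have hco : Continuous (fun x : ℝ => 1 - (x:ℂ) * z) := by continuity
      have := hco.tendsto 1
      simpa using this
    exact (hcont1.tendsto.comp hbase).neg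
  have heq' : (fun x : ℝ => -Complex.log (1 - x * z))
      =ᶠ[nhdsWithin 1 (Set.Iio 1)] (fun x : ℝ => ∑' n : ℕ, (((n:ℝ))⁻¹ • z ^ n) * (x:ℂ) ^ n) := by
    have hmem : Set.Ioo (0:ℝ) 1 ∈ nhdsWithin (1:ℝ) (Set.Iio 1) :=
      mem_nhdsWithin.mpr ⟨Set.Ioi 0, isOpen_Ioi, by norm_num,
        fun x hx => ⟨hx.1, hx.2⟩⟩
    filter_upwards [hmem] with x hx
    have hnorm : ‖(x:ℂ) * z‖ < 1 := by
      rw [norm_mul, hz, mul_one, Complex.norm_real, Real.norm_eq_abs, abs_of_pos hx.1]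
      exact hx.2
    have hsum := Complex.hasSum_taylorSeries_neg_log hnorm
    have hterm : ∀ n : ℕ, ((x:ℂ) * z) ^ n / n = (((n:ℝ))⁻¹ • z ^ n) * (x:ℂ) ^ n := by
      intro n
      rw [smul_inv_eq_div, mul_pow]
      ring
    rw [← hsum.tsum_eq]
    exact (tsum_congr hterm)
  have hmap : Filter.Tendsto (fun w : ℂ => ∑' n : ℕ, (((n:ℝ))⁻¹ • z ^ n) * w ^ n)
      ((nhdsWithin (1:ℝ) (Set.Iio 1)).map Complex.ofReal) (nhds (-Complex.log (1 - z))) := by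
    rw [Filter.tendsto_map'_iff]
    exact hc.congr' heq'
  have : L = -Complex.log (1 - z) := tendsto_nhds_unique habel hmap
  rwa [this] at hL

lemma F_eq_re (t : ℝ) (N : ℕ) :
    F N t = (∑ n ∈ Finset.range (N+1), ((n:ℝ))⁻¹ • Complex.exp ((2*t) * Complex.I) ^ n).re := by
  rw [Complex.re_sum]
  rw [Finset.sum_congr rfl (fun n _ => re_term t n)]
  have hIcc : Finset.range (N+1) = Finset.Icc 0 N := by
    rw [Finset.range_eq_Ico, Finset.Ico_add_one_right_eq_Icc]
  rw [hIcc, Finset.Icc_eq_cons_Ioc (Nat.zero_le N), Finset.sum_cons, F]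
  have h0 : Real.cos (2*((0:ℕ):ℝ)*t) / ((0:ℕ):ℝ) = 0 := by norm_num
  rw [h0, zero_add]

lemma tendsto_F {t : ℝ} (h : Real.sin t ≠ 0) :
    Filter.Tendsto (fun N => F N t) Filter.atTop (nhds (-Real.log |2 * Real.sin t|)) := by
  set z := Complex.exp ((2*t) * Complex.I) with hzdef
  have hz : ‖z‖ = 1 := norm_exp_two_mul_I t
  have hz1 : z ≠ 1 := exp_ne_one h
  have hlim := tendsto_partial_log hz hz1
  have hre := (Complex.continuous_re.tendsto _).comp hlim
  have hval : (-Complex.log (1 - z)).re = -Real.log |2 * Real.sin t| := by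
    rw [Complex.neg_re, Complex.log_re]
    congr 1
    rw [hzdef, norm_one_sub_exp, abs_mul, abs_two]
  have hfun : ∀ N : ℕ, F N t = (∑ n ∈ Finset.range (N+1), ((n:ℝ))⁻¹ • z ^ n).re :=
    fun N => F_eq_re t N
  have hcomp : Filter.Tendsto (fun N : ℕ => (∑ n ∈ Finset.range (N+1), ((n:ℝ))⁻¹ • z ^ n).re)
      Filter.atTop (nhds ((-Complex.log (1 - z)).re)) := by
    have hsh : Filter.Tendsto (fun N : ℕ => N + 1) Filter.atTop Filter.atTop :=
      Filter.tendsto_add_atTop_nat 1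
    exact hre.comp hsh
  rw [show (fun N => F N t) = fun N => (∑ n ∈ Finset.range (N+1), ((n:ℝ))⁻¹ • z ^ n).re
    from funext hfun, ← hval]
  exact hcomp

lemma sum_inv_Ioc (M : ℕ) : ∑ n ∈ Finset.Ioc 0 M, ((n:ℝ))⁻¹ = (harmonic M : ℝ) := by
  induction M with
  | zero => simp [harmonic]
  | succ m ih =>
    rw [Finset.sum_Ioc_succ_top (Nat.zero_le _), ih, harmonic_succ]
    push_cast
    ring

lemma F_le_bound {t : ℝ} (h : Real.sin t ≠ 0) (N : ℕ) : |F N t| ≤ bound t := by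
  set s := |Real.sin t| with hs
  have hs0 : 0 < s := abs_pos.mpr h
  have hs1 : s ≤ 1 := Real.abs_sin_le_one t
  have hinv1 : 1 ≤ 1/s := by rw [le_div_iff₀ hs0]; linarith
  set M := Nat.floor (1/s) with hMdef
  have hM1 : 1 ≤ M := Nat.le_floor (by exact_mod_cast hinv1)
  have hM0 : (0:ℝ) < (M:ℝ) := by exact_mod_cast Nat.lt_of_lt_of_le Nat.zero_lt_one hM1
  have hMle : (M:ℝ) ≤ 1/s := Nat.floor_le (by positivity)
  have hMgt : 1/s < (M:ℝ)+1 := Nat.lt_floor_add_one _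
  have hFabs : ∀ K : ℕ, |F K t| ≤ ∑ n ∈ Finset.Ioc 0 K, ((n:ℝ))⁻¹ := by
    intro K
    refine (Finset.abs_sum_le_sum_abs _ _).trans (Finset.sum_le_sum fun n hn => ?_)
    have hn1 : 1 ≤ n := (Finset.mem_Ioc.mp hn).1
    have hnpos : (0:ℝ) < (n:ℝ) := by exact_mod_cast Nat.lt_of_lt_of_le Nat.zero_lt_one hn1
    rw [abs_div, abs_of_pos hnpos, div_le_iff₀ hnpos, inv_mul_cancel₀ hnpos.ne']
    exact Real.abs_cos_le_one _
  have hrM : ∑ n ∈ Finset.Ioc 0 M, ((n:ℝ))⁻¹ ≤ 1 + Real.log M := by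
    rw [sum_inv_Ioc]
    exact harmonic_le_one_add_log M
  have hlogM : Real.log M ≤ Real.log (1/s) := Real.log_le_log hM0 hMle
  have hlog1s : Real.log (1/s) = -Real.log s := by rw [one_div, Real.log_inv]
  have hlogs : -Real.log s ≤ Real.log 2 + |Real.log (2*s)| := by
    have hm : Real.log (2*s) = Real.log 2 + Real.log s := Real.log_mul two_ne_zero hs0.ne'
    have h2 := neg_abs_le (Real.log (2*s))
    linarith
  have hbt : bound t = 3 + Real.log 2 + |Real.log (2*s)| := by
    rw [bound, hs, abs_mul, abs_two]
  have hhead : ∀ K : ℕ, K ≤ M → |F K t| ≤ 1 + Real.log 2 + |Real.log (2*s)| := by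
    intro K hK
    have hsub : ∑ n ∈ Finset.Ioc 0 K, ((n:ℝ))⁻¹ ≤ ∑ n ∈ Finset.Ioc 0 M, ((n:ℝ))⁻¹ :=
      Finset.sum_le_sum_of_subset_of_nonneg (Finset.Ioc_subset_Ioc le_rfl hK)
        (fun i _ _ => by positivity)
    have := hFabs K
    linarith
  rcases le_or_gt N M with hNM | hMN
  · rw [hbt]
    have := hhead N hNM
    linarith
  · have hsplit : F N t = F M t + ∑ n ∈ Finset.Ioc M N, Real.cos (2*n*t)/n := by
      rw [F, F, ← Finset.sum_Ioc_consecutive _ (Nat.zero_le M) hMN.le]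
    set z := Complex.exp ((2*t) * Complex.I) with hzdef
    have hz : ‖z‖ = 1 := norm_exp_two_mul_I t
    have hz1 : z ≠ 1 := exp_ne_one h
    have htail_re : ∑ n ∈ Finset.Ioc M N, Real.cos (2*n*t)/n
        = (∑ n ∈ Finset.Ioc M N, ((n:ℝ))⁻¹ • z ^ n).re := by
      rw [Complex.re_sum]
      exact Finset.sum_congr rfl fun n _ => (re_term t n).symm
    have htail : |∑ n ∈ Finset.Ioc M N, Real.cos (2*n*t)/n| ≤ 2 := by
      rw [htail_re]
      refine (Complex.abs_re_le_norm _).trans ?_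
      have hb := tail_bound hz hz1 M N
      refine hb.trans ?_
      rw [hzdef, norm_one_sub_exp t]
      have hMs : 1 < ((M:ℝ)+1)*s := by
        rw [div_lt_iff₀ hs0] at hMgt
        linarith
      rw [div_le_iff₀ (by positivity)]
      nlinarith
    rw [hbt, hsplit]
    have h1 := hhead M le_rfl
    calc |F M t + ∑ n ∈ Finset.Ioc M N, Real.cos (2*n*t)/n|
        ≤ |F M t| + |∑ n ∈ Finset.Ioc M N, Real.cos (2*n*t)/n| := abs_add_le _ _
      _ ≤ 3 + Real.log 2 + |Real.log (2*s)| := by linarith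

lemma F_continuous (N : ℕ) : Continuous (F N) := by
  unfold F
  apply continuous_finset_sum
  intro n _
  exact (Real.continuous_cos.comp (by continuity)).div_const _

lemma partial_integral (N : ℕ) (θ : ℝ) :
    (1/2) * ∑ n ∈ Finset.Icc 1 N, Real.sin (2*n*θ) / (n:ℝ)^2 = ∫ t in (0:ℝ)..θ, F N t := by
  unfold F
  have hInt : ∀ n ∈ Finset.Ioc 0 N,
      IntervalIntegrable (fun t => Real.cos (2*(n:ℝ)*t) / (n:ℝ)) volume 0 θ := by
    intro n _
    exact (((by fun_prop : Continuous fun t : ℝ => Real.cos (2*(n:ℝ)*t))).div_const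
      _).intervalIntegrable _ _
  rw [intervalIntegral.integral_finset_sum hInt]
  rw [show Finset.Ioc 0 N = Finset.Icc 1 N from (Finset.Icc_add_one_left_eq_Ioc 0 N).symm]
  rw [Finset.mul_sum]
  refine Finset.sum_congr rfl fun n hn => ?_
  have hn1 : 1 ≤ n := (Finset.mem_Icc.mp hn).1
  have hnpos : (0:ℝ) < (n:ℝ) := by exact_mod_cast Nat.lt_of_lt_of_le Nat.zero_lt_one hn1
  have h2n : (2*(n:ℝ)) ≠ 0 := by positivity
  rw [intervalIntegral.integral_div]
  rw [intervalIntegral.integral_comp_mul_left (fun u => Real.cos u) h2n]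
  rw [mul_zero, integral_cos, Real.sin_zero, sub_zero, smul_eq_mul]
  rw [eq_div_iff hnpos.ne', inv_mul_eq_div]
  field_simp

end LobAux

/-- Fourier series of the Lobachevsky function: the partial sums of
(1/2) ∑_{n=1}^∞ sin(2nθ)/n² converge to Λ(θ) for every real θ. -/
theorem lobachevsky_fourier_series (θ : ℝ) :
    Filter.Tendsto
      (fun N : ℕ => (1 / 2) * ∑ n ∈ Finset.Icc 1 N, Real.sin (2 * n * θ) / (n : ℝ) ^ 2)
      Filter.atTop (nhds (lobachevsky θ)) := by
  have key : Filter.Tendsto (fun N => ∫ t in (0:ℝ)..θ, LobAux.F N t) Filter.atTop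
      (nhds (∫ t in (0:ℝ)..θ, -Real.log |2*Real.sin t|)) := by
    apply intervalIntegral.tendsto_integral_filter_of_dominated_convergence LobAux.bound
    · exact Filter.Eventually.of_forall fun N =>
        ((LobAux.F_continuous N).aestronglyMeasurable).restrict
    · refine Filter.Eventually.of_forall fun N => ?_
      filter_upwards [LobAux.ae_sin_ne_zero] with t ht _
      simpa using LobAux.F_le_bound ht N
    · exact LobAux.intervalIntegrable_bound 0 θ
    · filter_upwards [LobAux.ae_sin_ne_zero] with t ht _
      exact LobAux.tendsto_F ht
  have h1 : lobachevsky θ = ∫ t in (0:ℝ)..θ, -Real.log |2*Real.sin t| := by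
    rw [intervalIntegral.integral_neg, lobachevsky]
  rw [h1]
  have h2 : (fun N : ℕ => (1 / 2) * ∑ n ∈ Finset.Icc 1 N, Real.sin (2 * n * θ) / (n : ℝ) ^ 2)
      = fun N => ∫ t in (0:ℝ)..θ, LobAux.F N t :=
    funext fun N => LobAux.partial_integral N θ
  rw [h2]
  exact key
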